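/- For S = {0,1} and q ∈ {0,1}, define F_q : S^ℕ → S^ℕ as follows: given k : ℕ → S, set q_i = (q + i) mod 2 and (F_q k)(i) = 1 − k(i) if q_i = 1, while if q_i = 0 then (F_q k)(i) = 1 − k(i) when k(i+1) = 0 and (F_q k)(i) = k(i) when k(i+1) = 1. Then F_0 and F_1 are bijections of S^ℕ. (This is the state dynamics of a non-Mealy automaton with output depending on two consecutive letters, which nevertheless acts by isomorphisms on the boundary of the binary tree.) -/

import Mathlib

/-- The state dynamics `A_q` of the non-Mealy automaton with state set `Q = {0,1}`,
output `ψ(1, s, s') = 1 − s`, `ψ(0, s, s') = 1 − s` if `s' = 0` and `s` if `s' = 1`,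
and transition `φ(q, s, s') = 1 − q` (so that `q_i = (q + i) mod 2`). -/
def aleshinLikeMap (q : Fin 2) (k : ℕ → Fin 2) : ℕ → Fin 2 :=
  fun i =>
    if q + (Fin.ofNat 2 i : Fin 2) = 1 then 1 - k i
    else if k (i + 1) = 0 then 1 - k i else k i

/-- Explicit inverse of `aleshinLikeMap`. -/
def aleshinLikeInv (q : Fin 2) (m : ℕ → Fin 2) : ℕ → Fin 2 :=
  fun i =>
    if q + (Fin.ofNat 2 i : Fin 2) = 1 then 1 - m i
    else if m (i + 1) = 1 then 1 - m i else m i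

lemma cast_succ (i : ℕ) : (Fin.ofNat 2 (i + 1) : Fin 2) = (Fin.ofNat 2 i : Fin 2) + 1 := by
  apply Fin.ext; simp only [Fin.val_ofNat, Fin.val_add]; simp

lemma left_inv (q : Fin 2) (k : ℕ → Fin 2) :
    aleshinLikeInv q (aleshinLikeMap q k) = k := by
  funext i
  simp only [aleshinLikeInv, aleshinLikeMap, cast_succ, ← add_assoc]
  generalize q + (Fin.ofNat 2 i : Fin 2) = a
  generalize k i = x
  generalize k (i + 1) = y
  generalize k (i + 1 + 1) = z
  revert a x y z; decide

lemma right_inv (q : Fin 2) (m : ℕ → Fin 2) :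
    aleshinLikeMap q (aleshinLikeInv q m) = m := by
  funext i
  simp only [aleshinLikeInv, aleshinLikeMap, cast_succ, ← add_assoc]
  generalize q + (Fin.ofNat 2 i : Fin 2) = a
  generalize m i = x
  generalize m (i + 1) = y
  generalize m (i + 1 + 1) = z
  revert a x y z; decide

lemma bij (q : Fin 2) : Function.Bijective (aleshinLikeMap q) :=
  Function.bijective_iff_has_inverse.2
    ⟨aleshinLikeInv q, fun k => left_inv q k, fun m => right_inv q m⟩

/-- `F_0` and `F_1` are bijections of `S^ℕ = (ℕ → Fin 2)`. -/
theorem statement13 :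
    Function.Bijective (aleshinLikeMap 0) ∧ Function.Bijective (aleshinLikeMap 1) := by
  exact ⟨bij 0, bij 1⟩
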